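/- Let p = (p₀,p₁,p₂,p₃) be a probability vector, s ∈ [0,1], and n = (n₁,n₂,n₃) ∈ ℝ³ a unit vector. If the compatibility condition holds — namely s·n_i = 0 whenever P_i = 0, and the sum of s²n_i²/P_i² over those i with P_i ≠ 0 is at most 1 — then s ≤ max{P₁, P₂, P₃}. -/

import Mathlib

/-- If the measurement `𝓜_{s,n}` (sharpness `s ∈ [0,1]`, unit direction
`n = (n₁,n₂,n₃)`) is compatible with the Pauli channel of probability vector
`p = (p₀,p₁,p₂,p₃)` — i.e. `s·nᵢ = 0` whenever `Pᵢ = 0` and the sum of `s²nᵢ²/Pᵢ²`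
over the `i` with `Pᵢ ≠ 0` is at most `1` — then `s ≤ max {P₁, P₂, P₃}`. -/
theorem sharpness_le_Pmax (p₀ p₁ p₂ p₃ s n₁ n₂ n₃ : ℝ)
    (h₀ : 0 ≤ p₀) (h₁ : 0 ≤ p₁) (h₂ : 0 ≤ p₂) (h₃ : 0 ≤ p₃)
    (hsum : p₀ + p₁ + p₂ + p₃ = 1)
    (hs0 : 0 ≤ s) (hs1 : s ≤ 1)
    (hn : n₁ ^ 2 + n₂ ^ 2 + n₃ ^ 2 = 1)
    (P₁ P₂ P₃ : ℝ)
    (hP₁ : P₁ = 2 * (Real.sqrt (p₀ * p₁) + Real.sqrt (p₂ * p₃)))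
    (hP₂ : P₂ = 2 * (Real.sqrt (p₀ * p₂) + Real.sqrt (p₁ * p₃)))
    (hP₃ : P₃ = 2 * (Real.sqrt (p₀ * p₃) + Real.sqrt (p₁ * p₂)))
    (hz₁ : P₁ = 0 → s * n₁ = 0)
    (hz₂ : P₂ = 0 → s * n₂ = 0)
    (hz₃ : P₃ = 0 → s * n₃ = 0)
    (hcompat : (if P₁ = 0 then 0 else s ^ 2 * n₁ ^ 2 / P₁ ^ 2) +
               (if P₂ = 0 then 0 else s ^ 2 * n₂ ^ 2 / P₂ ^ 2) +
               (if P₃ = 0 then 0 else s ^ 2 * n₃ ^ 2 / P₃ ^ 2) ≤ 1) :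
    s ≤ max (max P₁ P₂) P₃ := by
  have hP1nn : 0 ≤ P₁ := by
    rw [hP₁]; positivity
  have hP2nn : 0 ≤ P₂ := by
    rw [hP₂]; positivity
  have hP3nn : 0 ≤ P₃ := by
    rw [hP₃]; positivity
  set M := max (max P₁ P₂) P₃ with hM
  have hMnn : 0 ≤ M := le_trans hP3nn (le_max_right _ _)
  have h1M : P₁ ≤ M := le_trans (le_max_left _ _) (le_max_left _ _)
  have h2M : P₂ ≤ M := le_trans (le_max_right _ _) (le_max_left _ _)
  have h3M : P₃ ≤ M := le_max_right _ _
  rcases eq_or_lt_of_le hMnn with hM0 | hMpos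
  · -- M = 0, so all Pᵢ = 0
    have e₁ : P₁ = 0 := le_antisymm (by linarith) hP1nn
    have e₂ : P₂ = 0 := le_antisymm (by linarith) hP2nn
    have e₃ : P₃ = 0 := le_antisymm (by linarith) hP3nn
    have z₁ := hz₁ e₁
    have z₂ := hz₂ e₂
    have z₃ := hz₃ e₃
    have hsq : s ^ 2 = 0 := by
      calc s ^ 2 = s ^ 2 * (n₁ ^ 2 + n₂ ^ 2 + n₃ ^ 2) := by rw [hn]; ring
        _ = (s * n₁) ^ 2 + (s * n₂) ^ 2 + (s * n₃) ^ 2 := by ring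
        _ = 0 := by rw [z₁, z₂, z₃]; ring
    have hs : s = 0 := by
      have := pow_eq_zero_iff (n := 2) (by norm_num) |>.mp hsq
      exact this
    linarith
  · -- M > 0
    have key : ∀ (P n : ℝ), 0 ≤ P → P ≤ M → (P = 0 → s * n = 0) →
        s ^ 2 * n ^ 2 / M ^ 2 ≤ (if P = 0 then 0 else s ^ 2 * n ^ 2 / P ^ 2) := by
      intro P n hPn hPM hz
      by_cases hP0 : P = 0
      · simp [hP0]
        have := hz hP0
        have hzz : s ^ 2 * n ^ 2 = 0 := by nlinarith
        rw [hzz]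
        simp
      · simp [hP0]
        have hPpos : 0 < P := lt_of_le_of_ne hPn (Ne.symm hP0)
        apply div_le_div_of_nonneg_left (by positivity) (by positivity)
        nlinarith
    have k₁ := key P₁ n₁ hP1nn h1M hz₁
    have k₂ := key P₂ n₂ hP2nn h2M hz₂
    have k₃ := key P₃ n₃ hP3nn h3M hz₃
    have hsumle : s ^ 2 * n₁ ^ 2 / M ^ 2 + s ^ 2 * n₂ ^ 2 / M ^ 2 + s ^ 2 * n₃ ^ 2 / M ^ 2 ≤ 1 := by
      linarith
    have hM2 : 0 < M ^ 2 := by positivity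
    have : s ^ 2 * (n₁ ^ 2 + n₂ ^ 2 + n₃ ^ 2) ≤ M ^ 2 := by
      rw [← add_div, ← add_div, div_le_one hM2] at hsumle
      linarith
    rw [hn, mul_one] at this
    exact le_of_pow_le_pow_left₀ two_ne_zero hMnn this
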